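/- Assume the matrix W⁰ is symmetric, let λ_max be its largest eigenvalue, let c ∈ ℝ^{G_M}, and let w be the orthogonal projection of c onto the λ_max-eigenspace of W⁰. If Σ_{I∈G_M} w_I ≠ 0, then, with convergence in L²(ℤ_p), lim_{t→∞} (Σ_{I∈G_M}(e^{tW⁰}c)_I·Ω(p^M|x−I|_p)) / (p^{−M}Σ_{I∈G_M}(e^{tW⁰}c)_I) = (Σ_{I∈G_M} w_I·Ω(p^M|x−I|_p)) / (p^{−M}Σ_{I∈G_M} w_I); i.e. in the long term the normalized solution converges to a finite linear combination of the indicator functions of the balls I+p^Mℤ_p (survival of the fitter). -/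

import Mathlib

open MeasureTheory Filter
open scoped Real Topology ENNReal NNReal

namespace PadicES

variable (p : ℕ) [Fact p.Prime]

noncomputable instance : MeasurableSpace ℚ_[p] := borel _
instance : BorelSpace ℚ_[p] := ⟨rfl⟩
noncomputable instance : DecidableEq ℚ_[p] := Classical.decEq _

/-- The closed unit ball `ℤ_p` viewed as a subset of `ℚ_p`. -/
def unitBall : Set ℚ_[p] := {x : ℚ_[p] | ‖x‖ ≤ 1}

lemma isCompact_unitBall : IsCompact (unitBall p) := by
  have : unitBall p = Metric.closedBall (0 : ℚ_[p]) 1 := by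
    ext x; simp [unitBall, Metric.mem_closedBall, dist_eq_norm]
  rw [this]; exact isCompact_closedBall _ _

lemma interior_unitBall_nonempty : (interior (unitBall p)).Nonempty := by
  have : unitBall p = Metric.closedBall (0 : ℚ_[p]) 1 := by
    ext x; simp [unitBall, Metric.mem_closedBall, dist_eq_norm]
  rw [this, (IsUltrametricDist.isOpen_closedBall (0 : ℚ_[p]) one_ne_zero).interior_eq]
  exact ⟨0, by simp⟩

/-- The Haar measure `dx` on `(ℚ_p, +)`, normalized so that `ℤ_p` has measure `1`. -/
noncomputable def haar : Measure ℚ_[p] :=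
  Measure.addHaarMeasure ⟨⟨unitBall p, isCompact_unitBall p⟩, interior_unitBall_nonempty p⟩

lemma norm_scaled_le_one (y : ℚ_[p]) (h : ¬ ‖y‖ ≤ 1) :
    ‖(p : ℚ_[p]) ^ ((-y.valuation).toNat) * y‖ ≤ 1 := by
  have hy : y ≠ 0 := by rintro rfl; simp at h
  have hv : y.valuation < 0 := by
    by_contra hv
    push_neg at hv
    exact h ((Padic.norm_le_one_iff_val_nonneg (p := p) y).mpr hv)
  have hp0 : (0 : ℝ) < (p : ℝ) := by
    exact_mod_cast (Fact.out : p.Prime).pos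
  rw [norm_mul, norm_pow, Padic.norm_p, Padic.norm_eq_zpow_neg_valuation hy]
  rw [inv_pow, ← zpow_natCast, Int.toNat_of_nonneg (by omega)]
  rw [← zpow_neg, ← zpow_add₀ (ne_of_gt hp0)]
  simp

/-- The `p`-adic fractional part `{y}_p`, as a rational number. -/
noncomputable def fract (y : ℚ_[p]) : ℚ :=
  if h : ‖y‖ ≤ 1 then 0
  else
    ((PadicInt.toZModPow ((-y.valuation).toNat)
        (⟨(p : ℚ_[p]) ^ ((-y.valuation).toNat) * y, norm_scaled_le_one p y h⟩ :
          ℤ_[p])).val : ℚ) / (p : ℚ) ^ ((-y.valuation).toNat)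

/-- The standard additive character `χ_p(y) = exp(2 π i {y}_p)` of `(ℚ_p,+)`. -/
noncomputable def stdChar (y : ℚ_[p]) : ℂ :=
  Complex.exp (2 * (Real.pi : ℂ) * Complex.I * (fract p y : ℂ))

/-- The ball `a + p^R ℤ_p` of radius `p^{-R}` centered at `a`. -/
def ballSet (R : ℤ) (a : ℚ_[p]) : Set ℚ_[p] := {x : ℚ_[p] | ‖x - a‖ ≤ (p : ℝ) ^ (-R)}

/-- `Ω(p^R |x - a|_p)`: the indicator function of the ball `a + p^R ℤ_p` (complex valued). -/
noncomputable def ballInd (R : ℤ) (a x : ℚ_[p]) : ℂ := if ‖x - a‖ ≤ (p : ℝ) ^ (-R) then 1 else 0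

/-- `Ω(p^R |x - a|_p)`: the indicator function of the ball `a + p^R ℤ_p` (real valued). -/
noncomputable def ballIndR (R : ℤ) (a x : ℚ_[p]) : ℝ := if ‖x - a‖ ≤ (p : ℝ) ^ (-R) then 1 else 0

/-- The Kozyrev wavelet
`Ψ_{rnj}(x) = p^{-r/2} χ_p(p^{-1} j (p^r x - n)) Ω(|p^r x - n|_p)`. -/
noncomputable def wavelet (r : ℤ) (n : ℚ_[p]) (j : ℕ) (x : ℚ_[p]) : ℂ :=
  (((p : ℝ) ^ (-(r : ℝ) / 2) : ℝ) : ℂ) *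
    stdChar p ((p : ℚ_[p])⁻¹ * (j : ℚ_[p]) * ((p : ℚ_[p]) ^ r * x - n)) *
    ballInd p 0 0 ((p : ℚ_[p]) ^ r * x - n)

/-- The Fourier transform `ĝ(ξ) = ∫ χ_p(ξ x) g(x) dx` of a complex-valued function. -/
noncomputable def fourierT (g : ℚ_[p] → ℂ) (ξ : ℚ_[p]) : ℂ :=
  ∫ x, stdChar p (ξ * x) * g x ∂(haar p)

/-- A function on `ℚ_p` is radial if it only depends on `|x|_p`. -/
def IsRadial (g : ℚ_[p] → ℝ) : Prop := ∀ x y : ℚ_[p], ‖x‖ = ‖y‖ → g x = g y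

/-- Convolution `(g ∗ φ)(x) = ∫ g(x - y) φ(y) dy` of a real kernel with a complex function. -/
noncomputable def conv (g : ℚ_[p] → ℝ) (φ : ℚ_[p] → ℂ) (x : ℚ_[p]) : ℂ :=
  ∫ y, (g (x - y) : ℂ) * φ y ∂(haar p)

/-- Real-valued convolution. -/
noncomputable def convR (g φ : ℚ_[p] → ℝ) (x : ℚ_[p]) : ℝ :=
  ∫ y, g (x - y) * φ y ∂(haar p)

/-- The fitness function `f(x) = Σ_{I ∈ G_M} f(I) Ω(p^M |x - I|_p)`. -/
noncomputable def fitness (fc : ℚ_[p] → ℝ) (M : ℕ) (G : Finset ℚ_[p]) (x : ℚ_[p]) : ℝ :=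
  ∑ I ∈ G, fc I * ballIndR p M I x

/-- The matrix `W⁰` of the operator `W₀ φ = Q₀ ∗ (f φ)` on the span of the
indicator functions of the balls `I + p^M ℤ_p`, `I ∈ G_M`. -/
noncomputable def Wmat (Q₀ fc : ℚ_[p] → ℝ) (M : ℕ) (G : Finset ℚ_[p]) :
    Matrix {I : ℚ_[p] // I ∈ G} {I : ℚ_[p] // I ∈ G} ℝ :=
  fun I J =>
    if I = J then fc I.1 * ∫ z in ballSet p M 0, Q₀ z ∂(haar p)
    else fc I.1 * Q₀ (J.1 - I.1) * (p : ℝ) ^ (-(M : ℤ))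


/-- The operator `W₀ φ = Q₀ ∗ (f φ)` (complex-valued version). -/
noncomputable def Wop (Q₀ fc : ℚ_[p] → ℝ) (M : ℕ) (G : Finset ℚ_[p]) (φ : ℚ_[p] → ℂ)
    (x : ℚ_[p]) : ℂ :=
  conv p Q₀ (fun y => ((fitness p fc M G y : ℝ) : ℂ) * φ y) x

/-- The operator `W₀ φ = Q₀ ∗ (f φ)` (real-valued version). -/
noncomputable def WopR (Q₀ fc : ℚ_[p] → ℝ) (M : ℕ) (G : Finset ℚ_[p]) (φ : ℚ_[p] → ℝ)
    (x : ℚ_[p]) : ℝ :=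
  convR p Q₀ (fun y => fitness p fc M G y * φ y) x

/-- The `p`-adic heat kernel `Z(ξ; σ, α) = ∫ χ_p(ξ x) e^{-σ |x|_p^α} dx`. -/
noncomputable def heatK (σ α : ℝ) (ξ : ℚ_[p]) : ℂ :=
  ∫ x, stdChar p (ξ * x) * ((Real.exp (-σ * ‖x‖ ^ α) : ℝ) : ℂ) ∂(haar p)


open NormedSpace Nat in
lemma exp_mulVec_eigen {n : Type*} [Fintype n] [DecidableEq n]
    (A : Matrix n n ℝ) (v : n → ℝ) (μ : ℝ) (hv : A.mulVec v = μ • v) :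
    (exp A).mulVec v = Real.exp μ • v := by
  letI : SeminormedRing (Matrix n n ℝ) := Matrix.linftyOpSemiNormedRing
  letI : NormedRing (Matrix n n ℝ) := Matrix.linftyOpNormedRing
  letI : NormedAlgebra ℝ (Matrix n n ℝ) := Matrix.linftyOpNormedAlgebra
  have hpow : ∀ k : ℕ, (A ^ k).mulVec v = μ ^ k • v := by
    intro k
    induction k with
    | zero => simp [Matrix.one_mulVec]
    | succ k ih =>
      rw [pow_succ, ← Matrix.mulVec_mulVec, hv, Matrix.mulVec_smul, ih, smul_smul, pow_succ,
        mul_comm]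
  have hs : Summable fun k : ℕ => ((k ! : ℝ)⁻¹) • A ^ k := expSeries_summable' A
  let L : Matrix n n ℝ →ₗ[ℝ] (n → ℝ) :=
    { toFun := fun B => B.mulVec v
      map_add' := fun B C => Matrix.add_mulVec B C v
      map_smul' := fun r B => Matrix.smul_mulVec r B v }
  let Lc : Matrix n n ℝ →L[ℝ] (n → ℝ) := LinearMap.toContinuousLinearMap L
  have hLc : ∀ B : Matrix n n ℝ, Lc B = B.mulVec v := fun _ => rfl
  have key : (exp A).mulVec v = ∑' k : ℕ, ((k ! : ℝ)⁻¹) • (μ ^ k • v) := by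
    rw [exp_eq_tsum (𝕂 := ℝ)]
    calc (∑' k : ℕ, ((k ! : ℝ)⁻¹) • A ^ k).mulVec v = Lc (∑' k : ℕ, ((k ! : ℝ)⁻¹) • A ^ k) := rfl
      _ = ∑' k : ℕ, Lc (((k ! : ℝ)⁻¹) • A ^ k) := Lc.map_tsum hs
      _ = _ := tsum_congr fun k => by rw [_root_.map_smul, hLc, hpow]
  rw [key]
  have hs2 : Summable fun k : ℕ => ((k ! : ℝ)⁻¹) * μ ^ k := by
    simpa using expSeries_summable' (𝕂 := ℝ) μ
  rw [Real.exp_eq_exp_ℝ, exp_eq_tsum (𝕂 := ℝ)]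
  simp_rw [smul_smul]
  rw [hs2.tsum_smul_const]
  simp

open NormedSpace in
lemma coeff_tendsto {n : Type*} [Fintype n] [DecidableEq n]
    (A : Matrix n n ℝ) (hsymm : A.IsSymm) (lmax : ℝ)
    (hlmax : IsGreatest (spectrum ℝ A) lmax)
    (c w : n → ℝ)
    (hw : A.mulVec w = lmax • w)
    (hcw : ∀ v : n → ℝ, A.mulVec v = lmax • v → ∑ I, (c I - w I) * v I = 0) :
    Tendsto (fun t : ℝ => Real.exp (-(t * lmax)) • (exp (t • A)).mulVec c) atTop (nhds w) := by
  have hA : A.IsHermitian := hsymm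
  set μ : n → ℝ := hA.eigenvalues with hμ
  set u : n → n → ℝ := fun k => ⇑(hA.eigenvectorBasis k) with hu
  have heig : ∀ k, A.mulVec (u k) = μ k • u k := fun k => hA.mulVec_eigenvectorBasis k
  have hle : ∀ k, μ k ≤ lmax := fun k => hlmax.2 (hA.eigenvalues_mem_spectrum_real k)
  have hexpand : ∀ x : n → ℝ, ∑ k, (∑ j, u k j * x j) • u k = x := by
    intro x
    have := congrArg WithLp.ofLp (hA.eigenvectorBasis.sum_repr (WithLp.toLp 2 x))
    simp only [OrthonormalBasis.repr_apply_apply, WithLp.ofLp_sum, WithLp.ofLp_smul] at this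
    convert this using 3 with k
    rw [EuclideanSpace.inner_eq_star_dotProduct]
    simp [hu, dotProduct, mul_comm]
  have hswap : ∀ x y : n → ℝ, ∑ i, x i * A.mulVec y i = ∑ i, A.mulVec x i * y i := by
    intro x y
    have h1 : ∑ i, x i * A.mulVec y i = dotProduct x (A.mulVec y) := rfl
    rw [h1, Matrix.dotProduct_mulVec, ← Matrix.mulVec_transpose, hsymm.eq]
    rfl
  set d : n → ℝ := fun k => ∑ j, u k j * c j with hd
  have hfun : ∀ t : ℝ, Real.exp (-(t * lmax)) • (exp (t • A)).mulVec c
      = ∑ k, (d k * Real.exp (t * (μ k - lmax))) • u k := by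
    intro t
    have hc : c = ∑ k, d k • u k := (hexpand c).symm
    have h2 : (exp (t • A)).mulVec c = ∑ k, (d k * Real.exp (t * μ k)) • u k := by
      conv_lhs => rw [hc]
      rw [← Matrix.mulVecLin_apply, map_sum]
      refine Finset.sum_congr rfl fun k _ => ?_
      rw [_root_.map_smul, Matrix.mulVecLin_apply,
        exp_mulVec_eigen (t • A) (u k) (t * μ k)
          (by rw [Matrix.smul_mulVec, heig k, smul_smul]),
        smul_smul]
    rw [h2, Finset.smul_sum]
    refine Finset.sum_congr rfl fun k _ => ?_
    rw [smul_smul]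
    congr 1
    rw [← mul_assoc, mul_comm (Real.exp _), mul_assoc, ← Real.exp_add]
    ring_nf
  simp_rw [hfun]
  have hlim : Tendsto (fun t : ℝ => ∑ k, (d k * Real.exp (t * (μ k - lmax))) • u k) atTop
      (nhds (∑ k, (if μ k = lmax then d k else 0) • u k)) := by
    refine tendsto_finset_sum _ fun k _ => ?_
    rcases eq_or_lt_of_le (hle k) with h | h
    · simp only [h, if_pos, sub_self, mul_zero, Real.exp_zero, mul_one]
      exact tendsto_const_nhds
    · rw [if_neg (ne_of_lt h)]
      have h1 : Tendsto (fun t : ℝ => t * (μ k - lmax)) atTop atBot :=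
        tendsto_id.atTop_mul_const_of_neg (by linarith)
      have h2 : Tendsto (fun t : ℝ => d k * Real.exp (t * (μ k - lmax))) atTop (nhds 0) := by
        have := (Real.tendsto_exp_atBot.comp h1).const_mul (d k)
        simpa using this
      simpa using h2.smul_const (u k)
  have hlimw : (∑ k, (if μ k = lmax then d k else 0) • u k) = w := by
    have hw2 : ∀ k, μ k ≠ lmax → ∑ j, u k j * w j = 0 := by
      intro k hk
      have h1 : ∑ i, u k i * A.mulVec w i = ∑ i, A.mulVec (u k) i * w i := hswap _ _
      rw [hw, heig] at h1
      simp only [Pi.smul_apply, smul_eq_mul] at h1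
      have h2 : lmax * ∑ j, u k j * w j = μ k * ∑ j, u k j * w j := by
        rw [Finset.mul_sum, Finset.mul_sum]
        calc ∑ j, lmax * (u k j * w j) = ∑ j, u k j * (lmax * w j) :=
              Finset.sum_congr rfl fun j _ => by ring
          _ = ∑ j, μ k * u k j * w j := h1
          _ = ∑ j, μ k * (u k j * w j) := Finset.sum_congr rfl fun j _ => by ring
      have h3 : (lmax - μ k) * ∑ j, u k j * w j = 0 := by rw [sub_mul, h2, sub_self]
      exact (mul_eq_zero.mp h3).resolve_left (sub_ne_zero.mpr (Ne.symm hk))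
    have hdk : ∀ k, μ k = lmax → d k = ∑ j, u k j * w j := by
      intro k hk
      have h0 : ∑ j, (c j - w j) * u k j = 0 := hcw (u k) (by rw [heig, hk])
      have : ∑ j, u k j * c j - ∑ j, u k j * w j = 0 := by
        rw [← Finset.sum_sub_distrib, ← h0]
        exact Finset.sum_congr rfl fun j _ => by ring
      simp only [hd]
      linarith
    calc ∑ k, (if μ k = lmax then d k else 0) • u k
        = ∑ k, (∑ j, u k j * w j) • u k := by
          refine Finset.sum_congr rfl fun k _ => ?_
          by_cases hk : μ k = lmax
          · rw [if_pos hk, hdk k hk]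
          · rw [if_neg hk, hw2 k hk]
      _ = w := hexpand w
  rwa [hlimw] at hlim

lemma haar_unitBall : haar p (unitBall p) = 1 := Measure.addHaarMeasure_self

lemma meas_ballIndR (R : ℤ) (a : ℚ_[p]) : Measurable (ballIndR p R a) := by
  have hs : MeasurableSet (ballSet p R a) :=
    (isClosed_le (by fun_prop) continuous_const).measurableSet
  have : ballIndR p R a = (ballSet p R a).indicator (fun _ => (1:ℝ)) := by
    funext x; simp [ballIndR, ballSet, Set.indicator_apply]
  rw [this]
  exact measurable_const.indicator hs

lemma eLpNorm_ballIndR_le (M : ℕ) (a : ℚ_[p]) (ha : ‖a‖ ≤ 1) :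
    eLpNorm (ballIndR p M a) 2 (haar p) ≤ 1 := by
  have hs : MeasurableSet (ballSet p (M : ℤ) a) :=
    (isClosed_le (by fun_prop) continuous_const).measurableSet
  have hind : ballIndR p M a = (ballSet p (M : ℤ) a).indicator (fun _ => (1:ℝ)) := by
    funext x; simp [ballIndR, ballSet, Set.indicator_apply]
  have hsub : ballSet p (M : ℤ) a ⊆ unitBall p := by
    intro x hx
    have hp1 : (1 : ℝ) ≤ (p : ℝ) := by exact_mod_cast (Fact.out : p.Prime).one_lt.le
    have hr : (p : ℝ) ^ (-(M : ℤ)) ≤ 1 := zpow_le_one_of_nonpos₀ hp1 (by simp)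
    have h1 : ‖x - a‖ ≤ 1 := le_trans hx hr
    calc ‖x‖ = ‖(x - a) + a‖ := by ring_nf
      _ ≤ max ‖x - a‖ ‖a‖ := Padic.nonarchimedean _ _
      _ ≤ 1 := max_le h1 ha
  have hμ : haar p (ballSet p (M : ℤ) a) ≤ 1 := by
    rw [← haar_unitBall p]
    exact measure_mono hsub
  rw [hind, eLpNorm_indicator_const hs two_ne_zero ENNReal.ofNat_ne_top]
  simp only [nnnorm_one, ENNReal.coe_one, one_mul, enorm_one]
  exact ENNReal.rpow_le_one hμ (by norm_num)

/-- Survival of the fitter: if `W⁰` is symmetric with largest eigenvalue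
`lambda_max`, and `w` is the orthogonal projection of the initial coefficient vector `c` onto the
`lambda_max`-eigenspace, with `Σ_I w_I ≠ 0`, then in `L²(ℤ_p)` the normalized solution converges,
as `t → ∞`, to the corresponding normalized combination of indicator functions. -/
theorem survival_of_the_fitter (p : ℕ) [Fact p.Prime] (Q₀ : ℚ_[p] → ℝ)
    (hpos : ∀ x : ℚ_[p], 0 ≤ Q₀ x)
    (hrad : IsRadial p Q₀)
    (hsupp : ∀ x : ℚ_[p], ¬ ‖x‖ ≤ 1 → Q₀ x = 0)
    (hint : Integrable Q₀ (haar p))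
    (hone : ∫ x in unitBall p, Q₀ x ∂(haar p) = 1)
    (M : ℕ) (hM : 1 ≤ M) (G : Finset ℚ_[p])
    (hGsub : ∀ I ∈ G, ‖I‖ ≤ 1)
    (hG : ∀ x : ℚ_[p], ‖x‖ ≤ 1 → ∃! I : ℚ_[p], I ∈ G ∧ ‖x - I‖ ≤ (p : ℝ) ^ (-(M : ℤ)))
    (fc : ℚ_[p] → ℝ) (hfc : ∀ I ∈ G, 0 < fc I)
    (hsymm : (Wmat p Q₀ fc M G).IsSymm)
    (lmax : ℝ) (hlmax : IsGreatest (spectrum ℝ (Wmat p Q₀ fc M G)) lmax)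
    (c w : {I : ℚ_[p] // I ∈ G} → ℝ)
    -- `w` lies in the `lambda_max`-eigenspace
    (hw : (Wmat p Q₀ fc M G).mulVec w = lmax • w)
    -- and `c - w` is orthogonal to the `lambda_max`-eigenspace
    (hcw : ∀ v : {I : ℚ_[p] // I ∈ G} → ℝ,
      (Wmat p Q₀ fc M G).mulVec v = lmax • v → ∑ I, (c I - w I) * v I = 0)
    (hwsum : ∑ I, w I ≠ 0) :
    Filter.Tendsto
      (fun t : ℝ =>
        eLpNorm
          (fun x : ℚ_[p] =>
            (∑ I, (NormedSpace.exp (t • Wmat p Q₀ fc M G)).mulVec c I *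
                ballIndR p M I.1 x) /
              ((p : ℝ) ^ (-(M : ℤ)) *
                ∑ I, (NormedSpace.exp (t • Wmat p Q₀ fc M G)).mulVec c I) -
            (∑ I, w I * ballIndR p M I.1 x) / ((p : ℝ) ^ (-(M : ℤ)) * ∑ I, w I))
          2 (haar p))
      Filter.atTop (nhds 0) := by
  classical
  have hq : (0:ℝ) < (p : ℝ) ^ (-(M : ℤ)) := by
    have : (0:ℝ) < (p:ℝ) := by exact_mod_cast (Fact.out : p.Prime).pos
    positivity
  have hb : Tendsto (fun t : ℝ => Real.exp (-(t * lmax)) •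
      (NormedSpace.exp (t • Wmat p Q₀ fc M G)).mulVec c) atTop (nhds w) :=
    coeff_tendsto (Wmat p Q₀ fc M G) hsymm lmax hlmax c w hw hcw
  have hbI : ∀ I, Tendsto (fun t : ℝ => Real.exp (-(t * lmax)) *
      (NormedSpace.exp (t • Wmat p Q₀ fc M G)).mulVec c I) atTop (nhds (w I)) :=
    fun I => ((continuous_apply I).tendsto w).comp hb
  have hbsum : Tendsto (fun t : ℝ => ∑ I, Real.exp (-(t * lmax)) *
      (NormedSpace.exp (t • Wmat p Q₀ fc M G)).mulVec c I) atTop (nhds (∑ I, w I)) :=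
    tendsto_finset_sum _ fun I _ => hbI I
  set δ : {I : ℚ_[p] // I ∈ G} → ℝ → ℝ := fun I t =>
    (NormedSpace.exp (t • Wmat p Q₀ fc M G)).mulVec c I /
      ((p : ℝ) ^ (-(M : ℤ)) * ∑ J, (NormedSpace.exp (t • Wmat p Q₀ fc M G)).mulVec c J) -
      w I / ((p : ℝ) ^ (-(M : ℤ)) * ∑ J, w J) with hδdef
  have hδ : ∀ I, Tendsto (fun t => δ I t) atTop (nhds 0) := by
    intro I
    have hkey : ∀ t : ℝ, (NormedSpace.exp (t • Wmat p Q₀ fc M G)).mulVec c I /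
        ((p : ℝ) ^ (-(M : ℤ)) * ∑ J, (NormedSpace.exp (t • Wmat p Q₀ fc M G)).mulVec c J)
        = (Real.exp (-(t * lmax)) * (NormedSpace.exp (t • Wmat p Q₀ fc M G)).mulVec c I) /
        ((p : ℝ) ^ (-(M : ℤ)) *
          ∑ J, Real.exp (-(t * lmax)) * (NormedSpace.exp (t • Wmat p Q₀ fc M G)).mulVec c J) := by
      intro t
      rw [← Finset.mul_sum,
        show (p : ℝ) ^ (-(M : ℤ)) * (Real.exp (-(t * lmax)) *
          ∑ J, (NormedSpace.exp (t • Wmat p Q₀ fc M G)).mulVec c J) = Real.exp (-(t * lmax)) *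
          ((p : ℝ) ^ (-(M : ℤ)) * ∑ J, (NormedSpace.exp (t • Wmat p Q₀ fc M G)).mulVec c J)
          by ring,
        mul_div_mul_left _ _ (Real.exp_ne_zero _)]
    have hlim2 : Tendsto (fun t : ℝ =>
        (Real.exp (-(t * lmax)) * (NormedSpace.exp (t • Wmat p Q₀ fc M G)).mulVec c I) /
        ((p : ℝ) ^ (-(M : ℤ)) *
          ∑ J, Real.exp (-(t * lmax)) * (NormedSpace.exp (t • Wmat p Q₀ fc M G)).mulVec c J))
        atTop (nhds (w I / ((p : ℝ) ^ (-(M : ℤ)) * ∑ J, w J))) :=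
      (hbI I).div (tendsto_const_nhds.mul hbsum) (mul_ne_zero (ne_of_gt hq) hwsum)
    have : Tendsto (fun t => δ I t) atTop
        (nhds (w I / ((p : ℝ) ^ (-(M : ℤ)) * ∑ J, w J)
          - w I / ((p : ℝ) ^ (-(M : ℤ)) * ∑ J, w J))) := by
      simp only [hδdef, hkey]
      exact hlim2.sub_const _
    simpa using this
  have hrw : ∀ t : ℝ, (fun x : ℚ_[p] =>
      (∑ I, (NormedSpace.exp (t • Wmat p Q₀ fc M G)).mulVec c I * ballIndR p M I.1 x) /
        ((p : ℝ) ^ (-(M : ℤ)) * ∑ I, (NormedSpace.exp (t • Wmat p Q₀ fc M G)).mulVec c I) -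
      (∑ I, w I * ballIndR p M I.1 x) / ((p : ℝ) ^ (-(M : ℤ)) * ∑ I, w I)) =
      fun x => ∑ I, δ I t * ballIndR p M I.1 x := by
    intro t
    funext x
    rw [Finset.sum_div, Finset.sum_div, ← Finset.sum_sub_distrib]
    exact Finset.sum_congr rfl fun I _ => by simp only [hδdef]; ring
  have hbound : ∀ t : ℝ, eLpNorm (fun x => ∑ I, δ I t * ballIndR p M I.1 x) 2 (haar p)
      ≤ ∑ I, ENNReal.ofReal |δ I t| := by
    intro t
    have h1 : (fun x : ℚ_[p] => ∑ I, δ I t * ballIndR p M I.1 x)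
        = ∑ I : {I : ℚ_[p] // I ∈ G}, (fun x => δ I t * ballIndR p M I.1 x) := by
      funext x; simp
    rw [h1]
    calc eLpNorm (∑ I : {I : ℚ_[p] // I ∈ G}, (fun x => δ I t * ballIndR p M I.1 x)) 2 (haar p)
        ≤ ∑ I, eLpNorm (fun x => δ I t * ballIndR p M I.1 x) 2 (haar p) :=
          eLpNorm_sum_le
            (fun I _ => (measurable_const.mul (meas_ballIndR p M I.1)).aestronglyMeasurable)
            one_le_two
      _ ≤ ∑ I, ENNReal.ofReal |δ I t| := by
          refine Finset.sum_le_sum fun I _ => ?_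
          have h2 : (fun x => δ I t * ballIndR p M I.1 x) = δ I t • ballIndR p M I.1 := rfl
          rw [h2, eLpNorm_const_smul]
          calc (‖δ I t‖₊ : ℝ≥0∞) • eLpNorm (ballIndR p M I.1) 2 (haar p)
              ≤ (‖δ I t‖₊ : ℝ≥0∞) • 1 := by
                gcongr
                exact eLpNorm_ballIndR_le p M I.1 (hGsub I.1 I.2)
            _ = ENNReal.ofReal |δ I t| := by
                rw [smul_eq_mul, mul_one]; exact Real.enorm_eq_ofReal_abs _
  have hbnd0 : Tendsto (fun t => ∑ I, ENNReal.ofReal |δ I t|) atTop (nhds 0) := by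
    have h := tendsto_finset_sum (Finset.univ : Finset {I : ℚ_[p] // I ∈ G})
      (fun I _ => (ENNReal.tendsto_ofReal ((hδ I).abs)))
    simpa using h
  refine tendsto_of_tendsto_of_tendsto_of_le_of_le tendsto_const_nhds hbnd0
    (fun t => zero_le) (fun t => ?_)
  rw [hrw t]
  exact hbound t


end PadicES
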